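/- For any two probability distributions P, Q on a finite set, the chain of inequalities δ(P,Q)² ≤ Δ(P,Q)/2 ≤ C(P,Q) ≤ 2H²(P,Q) ≤ Δ(P,Q) ≤ 2δ(P,Q) holds, where δ is total variation distance, Δ is triangular discrimination, H² is squared Hellinger distance, and C is the two-distribution chi-squared capacity. -/
import Mathlib

open Finset

private lemma term_chi (p q r : ℝ) (hp : 0 ≤ p) (hq : 0 ≤ q) (hr : 0 ≤ r) (hr1 : r ≤ 1) :
    r * (1 - r) * ((p - q) ^ 2 / (r * p + (1 - r) * q)) ≤ (Real.sqrt p - Real.sqrt q) ^ 2 := by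
  set a := Real.sqrt p with ha'
  set b := Real.sqrt q with hb'
  have ha : 0 ≤ a := Real.sqrt_nonneg p
  have hb : 0 ≤ b := Real.sqrt_nonneg q
  have hpa : a ^ 2 = p := Real.sq_sqrt hp
  have hqb : b ^ 2 = q := Real.sq_sqrt hq
  have hden : 0 ≤ r * p + (1 - r) * q := by
    have := sub_nonneg.mpr hr1
    positivity
  rcases eq_or_lt_of_le hden with h | h
  · rw [← h, div_zero, mul_zero]; positivity
  · rw [mul_div_assoc', div_le_iff₀ h, ← hpa, ← hqb]
    nlinarith [sq_nonneg ((a - b) * (r * a - (1 - r) * b))]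

private lemma term_hell (p q : ℝ) (hp : 0 ≤ p) (hq : 0 ≤ q) :
    (Real.sqrt p - Real.sqrt q) ^ 2 ≤ (p - q) ^ 2 / (p + q) := by
  set a := Real.sqrt p with ha'
  set b := Real.sqrt q with hb'
  have ha : 0 ≤ a := Real.sqrt_nonneg p
  have hb : 0 ≤ b := Real.sqrt_nonneg q
  have hpa : a ^ 2 = p := Real.sq_sqrt hp
  have hqb : b ^ 2 = q := Real.sq_sqrt hq
  rcases eq_or_lt_of_le (by positivity : (0:ℝ) ≤ p + q) with h | h
  · have hp0 : p = 0 := by linarith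
    have hq0 : q = 0 := by linarith
    simp [ha', hb', hp0, hq0]
  · rw [le_div_iff₀ h]
    nlinarith [sq_nonneg (a - b), mul_nonneg ha hb, sq_nonneg (a + b)]

private lemma term_tv (p q : ℝ) (hp : 0 ≤ p) (hq : 0 ≤ q) :
    (p - q) ^ 2 / (p + q) ≤ |p - q| := by
  rcases eq_or_lt_of_le (by positivity : (0:ℝ) ≤ p + q) with h | h
  · rw [← h, div_zero]; positivity
  · rw [div_le_iff₀ h]
    have h1 : |p - q| ≤ p + q := by
      rw [abs_sub_le_iff]; constructor <;> linarith
    calc (p - q) ^ 2 = |p - q| * |p - q| := by rw [← sq_abs, sq]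
    _ ≤ |p - q| * (p + q) := by
        exact mul_le_mul_of_nonneg_left h1 (abs_nonneg _)

theorem divergence_chain {X : Type*} [Fintype X]
    (P Q : X → ℝ)
    (hP0 : ∀ x, 0 ≤ P x) (hQ0 : ∀ x, 0 ≤ Q x)
    (hP1 : ∑ x, P x = 1) (hQ1 : ∑ x, Q x = 1) :
    ((1 / 2) * ∑ x, |P x - Q x|) ^ 2 ≤ (∑ x, (P x - Q x) ^ 2 / (P x + Q x)) / 2 ∧
    (∑ x, (P x - Q x) ^ 2 / (P x + Q x)) / 2 ≤
      sSup ((fun r : ℝ =>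
          r * (1 - r) * ∑ x, (P x - Q x) ^ 2 / (r * P x + (1 - r) * Q x)) ''
            Set.Icc (0 : ℝ) 1) ∧
    sSup ((fun r : ℝ =>
          r * (1 - r) * ∑ x, (P x - Q x) ^ 2 / (r * P x + (1 - r) * Q x)) ''
            Set.Icc (0 : ℝ) 1) ≤
      2 * ((1 / 2) * ∑ x, (Real.sqrt (P x) - Real.sqrt (Q x)) ^ 2) ∧
    2 * ((1 / 2) * ∑ x, (Real.sqrt (P x) - Real.sqrt (Q x)) ^ 2) ≤
      ∑ x, (P x - Q x) ^ 2 / (P x + Q x) ∧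
    ∑ x, (P x - Q x) ^ 2 / (P x + Q x) ≤ 2 * ((1 / 2) * ∑ x, |P x - Q x|) := by
  set f : ℝ → ℝ := fun r =>
      r * (1 - r) * ∑ x, (P x - Q x) ^ 2 / (r * P x + (1 - r) * Q x) with hf
  set S := f '' Set.Icc (0 : ℝ) 1 with hS
  set Δ := ∑ x, (P x - Q x) ^ 2 / (P x + Q x) with hΔ
  set H := ∑ x, (Real.sqrt (P x) - Real.sqrt (Q x)) ^ 2 with hH
  -- upper bound for all elements of S
  have hub : ∀ y ∈ S, y ≤ H := by
    rintro y ⟨r, ⟨hr0, hr1⟩, rfl⟩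
    rw [hf]
    simp only
    rw [Finset.mul_sum]
    exact Finset.sum_le_sum fun x _ =>
      term_chi (P x) (Q x) r (hP0 x) (hQ0 x) hr0 hr1
  have hne : S.Nonempty := ⟨f 0, Set.mem_image_of_mem f (by norm_num)⟩
  have hbdd : BddAbove S := ⟨H, fun y hy => hub y hy⟩
  -- ineq 2: Δ/2 = f (1/2) ∈ S
  have hmem : Δ / 2 ∈ S := by
    refine ⟨1/2, by norm_num, ?_⟩
    rw [hf]
    simp only
    have : ∀ x : X, (P x - Q x) ^ 2 / ((1/2 : ℝ) * P x + (1 - 1/2) * Q x)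
        = 2 * ((P x - Q x) ^ 2 / (P x + Q x)) := by
      intro x
      rw [show ((1/2 : ℝ) * P x + (1 - 1/2) * Q x) = (P x + Q x) / 2 by ring,
        div_div_eq_mul_div]
      ring
    rw [Finset.sum_congr rfl fun x _ => this x, ← Finset.mul_sum, ← hΔ]
    ring
  have ineq2 : Δ / 2 ≤ sSup S := le_csSup hbdd hmem
  have ineq3 : sSup S ≤ 2 * ((1/2) * H) := by
    rw [show 2 * ((1/2 : ℝ) * H) = H by ring]
    exact csSup_le hne hub
  have ineq4 : 2 * ((1/2 : ℝ) * H) ≤ Δ := by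
    rw [show 2 * ((1/2 : ℝ) * H) = H by ring, hH, hΔ]
    exact Finset.sum_le_sum fun x _ => term_hell (P x) (Q x) (hP0 x) (hQ0 x)
  have ineq5 : Δ ≤ 2 * ((1/2) * ∑ x, |P x - Q x|) := by
    rw [show 2 * ((1/2 : ℝ) * ∑ x, |P x - Q x|) = ∑ x, |P x - Q x| by ring, hΔ]
    exact Finset.sum_le_sum fun x _ => term_tv (P x) (Q x) (hP0 x) (hQ0 x)
  -- ineq 1: Cauchy-Schwarz
  have ineq1 : ((1/2 : ℝ) * ∑ x, |P x - Q x|) ^ 2 ≤ Δ / 2 := by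
    have key := Finset.sum_mul_sq_le_sq_mul_sq Finset.univ
      (fun x => |P x - Q x| / Real.sqrt (P x + Q x))
      (fun x => Real.sqrt (P x + Q x))
    have e1 : ∀ x : X, |P x - Q x| / Real.sqrt (P x + Q x) * Real.sqrt (P x + Q x)
        = |P x - Q x| := by
      intro x
      rcases eq_or_lt_of_le (add_nonneg (hP0 x) (hQ0 x)) with h | h
      · have hp0 : P x = 0 := by have := hP0 x; have := hQ0 x; linarith
        have hq0 : Q x = 0 := by have := hP0 x; have := hQ0 x; linarith
        simp [hp0, hq0]
      · rw [div_mul_cancel₀]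
        exact (Real.sqrt_pos.mpr h).ne'
    have e2 : ∀ x : X, (|P x - Q x| / Real.sqrt (P x + Q x)) ^ 2
        = (P x - Q x) ^ 2 / (P x + Q x) := by
      intro x
      rw [div_pow, sq_abs, Real.sq_sqrt (add_nonneg (hP0 x) (hQ0 x))]
    have e3 : ∀ x : X, (Real.sqrt (P x + Q x)) ^ 2 = P x + Q x := by
      intro x
      exact Real.sq_sqrt (add_nonneg (hP0 x) (hQ0 x))
    rw [Finset.sum_congr rfl fun x _ => e1 x, Finset.sum_congr rfl fun x _ => e2 x,
      Finset.sum_congr rfl fun x _ => e3 x, Finset.sum_add_distrib, hP1, hQ1] at key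
    rw [← hΔ] at key
    nlinarith [key]
  exact ⟨ineq1, ineq2, ineq3, ineq4, ineq5⟩
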